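/- Let β ∈ ℂ and DS(U) := −(β/(2n))·𝒫(U − U⁻¹) with 𝒫M := M − (tr M / n)·1. Let U : ℝ → M_n(ℂ) be differentiable with U(t) invertible for all t and U'(t) = (DS(U(t)))ᴴ · U(t). Then det U(t) is constant in t; in particular, if det U(0) = 1, then U(t) ∈ SL(n,ℂ) for all t (the gradient flow of the one-site model preserves the complexified group SL(n,ℂ)). -/

import Mathlib

open Matrix

attribute [local instance] Matrix.frobeniusNormedAddCommGroup Matrix.frobeniusNormedSpace

/-- The traceless projection `𝒫 M = M − (tr M / n)·1`. -/
noncomputable def tracelessPart {n : ℕ} (M : Matrix (Fin n) (Fin n) ℂ) :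
    Matrix (Fin n) (Fin n) ℂ :=
  M - (M.trace / (n : ℂ)) • (1 : Matrix (Fin n) (Fin n) ℂ)

/-- The group gradient `DS(U) = −(β/(2n))·𝒫(U − U⁻¹)` of the one-site action. -/
noncomputable def oneSiteGrad {n : ℕ} (β : ℂ) (U : Matrix (Fin n) (Fin n) ℂ) :
    Matrix (Fin n) (Fin n) ℂ :=
  -(β / (2 * (n : ℂ))) • tracelessPart (U - U⁻¹)

/-- Row expansion of the determinant of a matrix with one row replaced. -/
lemma det_updateRow_expand {n : ℕ} (M : Matrix (Fin n) (Fin n) ℂ) (i : Fin n) (r : Fin n → ℂ) :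
    (M.updateRow i r).det =
      ∑ σ : Equiv.Perm (Fin n), ((Equiv.Perm.sign σ : ℤ) : ℂ) *
        (r (σ i) * ∏ j ∈ Finset.univ.erase i, M j (σ j)) := by
  rw [← Matrix.det_transpose, Matrix.det_apply]
  refine Finset.sum_congr rfl fun σ _ => ?_
  rw [Units.smul_def, zsmul_eq_mul]
  congr 1
  rw [show (∏ j, (M.updateRow i r)ᵀ (σ j) j) = ∏ j, M.updateRow i r j (σ j) from rfl,
    ← Finset.mul_prod_erase _ _ (Finset.mem_univ i), Matrix.updateRow_self]
  congr 1
  exact Finset.prod_congr rfl fun j hj => by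
    rw [Matrix.updateRow_ne (Finset.ne_of_mem_erase hj)]

/-- Jacobi-type formula along a linear flow `U' = B U`. -/
lemma hasDerivAt_det_of_flow {n : ℕ} (U : ℝ → Matrix (Fin n) (Fin n) ℂ)
    (B : Matrix (Fin n) (Fin n) ℂ) (t : ℝ)
    (h : HasDerivAt U (B * U t) t) :
    HasDerivAt (fun s => (U s).det) (B.trace * (U t).det) t := by
  classical
  -- derivative of each entry
  have hent : ∀ i j : Fin n, HasDerivAt (fun s => U s i j) ((B * U t) i j) t := by
    intro i j
    let L : Matrix (Fin n) (Fin n) ℂ →ₗ[ℂ] ℂ := Matrix.entryLinearMap ℂ ℂ i j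
    exact ((L.toContinuousLinearMap.restrictScalars ℝ).hasFDerivAt.comp_hasDerivAt t h :)
  -- derivative of each permutation product
  have hprod : ∀ σ : Equiv.Perm (Fin n),
      HasDerivAt (fun s => ∏ i, U s i (σ i))
        (∑ i, (∏ j ∈ Finset.univ.erase i, U t j (σ j)) • (B * U t) i (σ i)) t :=
    fun σ => HasDerivAt.fun_finsetProd (fun i _ => hent i (σ i))
  have hsum : HasDerivAt
      (fun s => ∑ σ : Equiv.Perm (Fin n), ((Equiv.Perm.sign σ : ℤ) : ℂ) * ∏ i, U s i (σ i))
      (∑ σ : Equiv.Perm (Fin n), ((Equiv.Perm.sign σ : ℤ) : ℂ) *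
        ∑ i, (∏ j ∈ Finset.univ.erase i, U t j (σ j)) • (B * U t) i (σ i)) t :=
    HasDerivAt.fun_sum (fun σ _ => (hprod σ).const_mul _)
  have hfun : (fun s => (U s).det) =
      fun s => ∑ σ : Equiv.Perm (Fin n), ((Equiv.Perm.sign σ : ℤ) : ℂ) * ∏ i, U s i (σ i) := by
    funext s
    rw [← Matrix.det_transpose, Matrix.det_apply]
    exact Finset.sum_congr rfl fun σ _ => by
      rw [Units.smul_def, zsmul_eq_mul]; rfl
  have key : (∑ σ : Equiv.Perm (Fin n), ((Equiv.Perm.sign σ : ℤ) : ℂ) *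
        ∑ i, (∏ j ∈ Finset.univ.erase i, U t j (σ j)) • (B * U t) i (σ i))
      = B.trace * (U t).det := by
    have hS : ∀ i k : Fin n,
        (((U t).updateRow i (U t k)).det) =
          ∑ σ : Equiv.Perm (Fin n), ((Equiv.Perm.sign σ : ℤ) : ℂ) *
            (U t k (σ i) * ∏ j ∈ Finset.univ.erase i, U t j (σ j)) :=
      fun i k => det_updateRow_expand (U t) i (U t k)
    calc (∑ σ : Equiv.Perm (Fin n), ((Equiv.Perm.sign σ : ℤ) : ℂ) *
          ∑ i, (∏ j ∈ Finset.univ.erase i, U t j (σ j)) • (B * U t) i (σ i))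
        = ∑ i, ∑ k, B i k * (((U t).updateRow i (U t k)).det) := by
          simp only [hS, smul_eq_mul, Matrix.mul_apply, Finset.mul_sum]
          rw [Finset.sum_comm]
          refine Finset.sum_congr rfl fun i _ => ?_
          rw [Finset.sum_comm]
          exact Finset.sum_congr rfl fun k _ => Finset.sum_congr rfl fun σ _ => by ring
      _ = ∑ i, B i i * (U t).det := by
          refine Finset.sum_congr rfl fun i _ => ?_
          rw [Finset.sum_eq_single i]
          · rw [Matrix.updateRow_eq_self]
          · intro k _ hk
            rw [Matrix.det_updateRow_eq_zero hk, mul_zero]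
          · simp
      _ = B.trace * (U t).det := by
          simp [Matrix.trace, Matrix.diag, Finset.sum_mul]
  rw [hfun, ← key]
  exact hsum

/-- The gradient flow of the one-site model preserves the determinant;
in particular, if `det U(0) = 1` then `U(t) ∈ SL(n,ℂ)` for all `t`. -/
theorem oneSite_flow_preserves_det {n : ℕ} [NeZero n] (β : ℂ)
    (U : ℝ → Matrix (Fin n) (Fin n) ℂ)
    (hUinv : ∀ t : ℝ, IsUnit (U t))
    (hflow : ∀ t : ℝ, HasDerivAt U ((oneSiteGrad β (U t))ᴴ * U t) t) :
    (∀ t₁ t₂ : ℝ, (U t₁).det = (U t₂).det) ∧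
    ((U 0).det = 1 → ∀ t : ℝ, (U t).det = 1) := by
  have hn : (n : ℂ) ≠ 0 := Nat.cast_ne_zero.mpr (NeZero.ne n)
  have htr : ∀ t : ℝ, ((oneSiteGrad β (U t))ᴴ).trace = 0 := by
    intro t
    have h0 : (oneSiteGrad β (U t)).trace = 0 := by
      simp [oneSiteGrad, tracelessPart, Matrix.trace_smul, Matrix.trace_sub, Matrix.trace_one,
        smul_eq_mul, div_mul_cancel₀ _ hn]
    rw [Matrix.trace_conjTranspose, h0, star_zero]
  have hzero : ∀ t : ℝ, HasDerivAt (fun s => (U s).det) 0 t := by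
    intro t
    have := hasDerivAt_det_of_flow U ((oneSiteGrad β (U t))ᴴ) t (hflow t)
    rwa [htr t, zero_mul] at this
  have hconst : ∀ t₁ t₂ : ℝ, (U t₁).det = (U t₂).det := fun t₁ t₂ =>
    is_const_of_deriv_eq_zero (fun s => (hzero s).differentiableAt) (fun s => (hzero s).deriv) t₁ t₂
  exact ⟨hconst, fun h0 t => (hconst t 0).trans h0⟩
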